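/- Let β₁, β₂, δ₁, δ₂ ≥ 0 with β₁+δ₁ > 0, β₂+δ₂ > 0, and α₁, α₂, γ₁, γ₂ > 0. Suppose |A_n| ≤ (2n+1)(n+1)/6 and |B_n| ≤ (2n−1)(n−1)/6 for all n ≥ 2. If 2W'''_{(α₁,β₁),(γ₁δ₁)}(1) + 9W''_{(α₁,β₁),(γ₁,δ₁)}(1) + 6(W'_{(α₁,β₁),(γ₁,δ₁)}(1) − 1) + 2W'''_{(α₂,β₂),(γ₂,δ₂)}(1) + 3W''_{(α₂,β₂),(γ₂,δ₂)}(1) ≤ 6, then for every complex ε with |ε| = 1, ∑_{n=2}^∞ n|t_n| ≤ 1, where t_n = Γ(α₁)Γ(γ₁)A_n /(Γ(α₁+(n−1)β₁)Γ(γ₁+(n−1)δ₁)) + ε Γ(α₂)Γ(γ₂)B_n /(Γ(α₂+(n−1)β₂)Γ(γ₂+(n−1)δ₂)). -/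

import Mathlib

open Real Filter Set

/-- The normalized four-parameter Wright function
`W_{(a,b),(c,d)}(x) = x + ∑_{n=2}^∞ Γ(a)Γ(c) xⁿ / (Γ(a+(n-1)b)Γ(c+(n-1)d))`
(as a function of a real variable, evaluated along the real axis). -/
noncomputable def wrightW (a b c d : ℝ) : ℝ → ℝ := fun x =>
  x + ∑' n : ℕ, Real.Gamma a * Real.Gamma c /
    (Real.Gamma (a + ((n : ℝ) + 1) * b) * Real.Gamma (c + ((n : ℝ) + 1) * d)) * x ^ (n + 2)


lemma myGamma_one_le {x : ℝ} (hx : 2 ≤ x) : 1 ≤ Real.Gamma x := by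
  rcases eq_or_lt_of_le hx with h | h
  · simp [← h, Real.Gamma_two]
  · have := Real.Gamma_strictMonoOn_Ici (mem_Ici.2 (le_refl (2:ℝ))) (mem_Ici.2 hx) h
    simpa [Real.Gamma_two] using this.le

lemma myGamma_mono {x y : ℝ} (hx : 2 ≤ x) (hxy : x ≤ y) : Real.Gamma x ≤ Real.Gamma y :=
  Real.Gamma_strictMonoOn_Ici.monotoneOn (mem_Ici.2 hx) (mem_Ici.2 (hx.trans hxy)) hxy

lemma gamma_step' {b : ℝ} (hb : 0 < b) {T : ℝ} (hT : 1 ≤ T) :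
    ∃ Y : ℝ, ∀ y : ℝ, Y ≤ y → T * Real.Gamma y ≤ Real.Gamma (y + b) := by
  rcases le_or_gt 1 b with hb1 | hb1
  · refine ⟨max 2 T, fun y hy => ?_⟩
    have h2 : (2:ℝ) ≤ y := le_trans (le_max_left _ _) hy
    have hTy : T ≤ y := le_trans (le_max_right _ _) hy
    have hpos : 0 < Real.Gamma y := Real.Gamma_pos_of_pos (by linarith)
    have h1 : Real.Gamma (y + 1) ≤ Real.Gamma (y + b) := myGamma_mono (by linarith) (by linarith)
    rw [Real.Gamma_add_one (by positivity)] at h1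
    nlinarith
  · refine ⟨max 2 (Real.exp (Real.log (2 * T) / b)), fun y hy => ?_⟩
    have h2 : (2:ℝ) ≤ y := le_trans (le_max_left _ _) hy
    have hye : Real.exp (Real.log (2 * T) / b) ≤ y := le_trans (le_max_right _ _) hy
    have hy0 : 0 < y := by linarith
    have hyb0 : 0 < y + b := by linarith
    have hGy : 0 < Real.Gamma y := Real.Gamma_pos_of_pos hy0
    have hGyb : 0 < Real.Gamma (y + b) := Real.Gamma_pos_of_pos hyb0
    -- log-convexity
    have conv := Real.convexOn_log_Gamma.2 (mem_Ioi.2 hyb0) (mem_Ioi.2 (by linarith : (0:ℝ) < y + b + 1))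
      hb.le (by linarith : (0:ℝ) ≤ 1 - b) (by ring)
    have hcomb : b • (y + b) + (1 - b) • (y + b + 1) = y + 1 := by
      simp only [smul_eq_mul]; ring
    rw [hcomb] at conv
    simp only [Function.comp] at conv
    rw [Real.Gamma_add_one (ne_of_gt hy0), show y + b + 1 = (y + b) + 1 by ring,
      Real.Gamma_add_one (ne_of_gt hyb0), Real.log_mul (ne_of_gt hy0) (ne_of_gt hGy),
      Real.log_mul (ne_of_gt hyb0) (ne_of_gt hGyb)] at conv
    -- conv : log y + log Γ y ≤ b * log Γ (y+b) + (1-b) * (log (y+b) + log Γ (y+b))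
    have key : Real.log T + Real.log (Real.Gamma y) ≤ Real.log (Real.Gamma (y + b)) := by
      have hlyb : Real.log (y + b) ≤ Real.log 2 + Real.log y := by
        rw [← Real.log_mul (by norm_num) (ne_of_gt hy0)]
        exact Real.log_le_log (by linarith) (by nlinarith)
      have hly2 : Real.log 2 ≤ Real.log y := Real.log_le_log (by norm_num) h2
      have hly0 : 0 ≤ Real.log y := le_trans (by positivity) hly2
      have hblog : Real.log (2 * T) ≤ b * Real.log y := by
        have := Real.log_le_log (Real.exp_pos _) hye
        rw [Real.log_exp] at this
        rw [div_le_iff₀ hb] at this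
        nlinarith
      rw [Real.log_mul (by norm_num) (by linarith : T ≠ 0)] at hblog
      simp only [smul_eq_mul] at conv
      have hm1 : (1-b) * Real.log (y+b) ≤ (1-b) * (Real.log 2 + Real.log y) :=
        mul_le_mul_of_nonneg_left hlyb (by linarith)
      have hm2 : 0 ≤ b * Real.log 2 := mul_nonneg hb.le (by positivity)
      nlinarith [conv, hm1, hm2, hblog]
    rw [← Real.log_mul (by linarith : T ≠ 0) (ne_of_gt hGy)] at key
    exact (Real.log_le_log_iff (by positivity) hGyb).1 key

lemma tendsto_seq (a b : ℝ) (hb : 0 < b) :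
    Tendsto (fun n : ℕ => a + ((n : ℝ) + 1) * b) atTop atTop := by
  have h1 : Tendsto (fun n : ℕ => ((n : ℝ) + 1)) atTop atTop :=
    tendsto_atTop_add_const_right _ 1 tendsto_natCast_atTop_atTop
  exact tendsto_atTop_add_const_left _ a (h1.atTop_mul_const hb)

lemma gamma_step_seq (a b : ℝ) (hb : 0 < b) (T : ℝ) (hT : 1 ≤ T) :
    ∀ᶠ n : ℕ in atTop,
      T * Real.Gamma (a + ((n : ℝ) + 1) * b) ≤ Real.Gamma (a + ((n : ℝ) + 2) * b) := by
  obtain ⟨Y, hY⟩ := gamma_step' hb hT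
  filter_upwards [(tendsto_seq a b hb).eventually_ge_atTop Y] with n hn
  have h := hY _ hn
  have : a + ((n : ℝ) + 2) * b = (a + ((n : ℝ) + 1) * b) + b := by ring
  rw [this]
  exact h

lemma gamma_mono_seq (c d : ℝ) (hd : 0 ≤ d) :
    ∀ᶠ n : ℕ in atTop,
      Real.Gamma (c + ((n : ℝ) + 1) * d) ≤ Real.Gamma (c + ((n : ℝ) + 2) * d) := by
  rcases eq_or_lt_of_le hd with h | h
  · refine Eventually.of_forall fun n => le_of_eq ?_
    rw [← h]; ring_nf
  · filter_upwards [(tendsto_seq c d h).eventually_ge_atTop 2] with n hn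
    exact myGamma_mono hn (by nlinarith [h.le])

noncomputable def cc (a b c d : ℝ) (n : ℕ) : ℝ := Real.Gamma a * Real.Gamma c /
  (Real.Gamma (a + ((n : ℝ) + 1) * b) * Real.Gamma (c + ((n : ℝ) + 1) * d))

lemma cc_pos {a b c d : ℝ} (ha : 0 < a) (hc : 0 < c) (hb : 0 ≤ b) (hd : 0 ≤ d) (n : ℕ) :
    0 < cc a b c d n := by
  unfold cc
  have h1 : 0 < a + ((n : ℝ) + 1) * b := by positivity
  have h2 : 0 < c + ((n : ℝ) + 1) * d := by positivity
  exact div_pos (mul_pos (Real.Gamma_pos_of_pos ha) (Real.Gamma_pos_of_pos hc))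
    (mul_pos (Real.Gamma_pos_of_pos h1) (Real.Gamma_pos_of_pos h2))

lemma summable_master {a b c d : ℝ} (ha : 0 < a) (hc : 0 < c) (hb : 0 ≤ b) (hd : 0 ≤ d)
    (hbd : 0 < b + d) :
    Summable (fun n : ℕ => ((n : ℝ) + 4) ^ 3 * 3 ^ n * cc a b c d n) := by
  have hstep : ∀ᶠ n : ℕ in atTop,
      100 * (Real.Gamma (a + ((n : ℝ) + 1) * b) * Real.Gamma (c + ((n : ℝ) + 1) * d)) ≤
        Real.Gamma (a + ((n : ℝ) + 2) * b) * Real.Gamma (c + ((n : ℝ) + 2) * d) := by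
    have hposG : ∀ (x : ℝ), 0 < x → 0 < Real.Gamma x := fun x h => Real.Gamma_pos_of_pos h
    rcases lt_or_eq_of_le hb with hbp | hbe
    · filter_upwards [gamma_step_seq a b hbp 100 (by norm_num), gamma_mono_seq c d hd] with n h1 h2
      have p1 : 0 < Real.Gamma (a + ((n : ℝ) + 1) * b) := hposG _ (by positivity)
      have p2 : 0 < Real.Gamma (c + ((n : ℝ) + 1) * d) := hposG _ (by positivity)
      calc 100 * (Real.Gamma (a + ((n : ℝ) + 1) * b) * Real.Gamma (c + ((n : ℝ) + 1) * d))
          = (100 * Real.Gamma (a + ((n : ℝ) + 1) * b)) * Real.Gamma (c + ((n : ℝ) + 1) * d) := by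
            ring
        _ ≤ Real.Gamma (a + ((n : ℝ) + 2) * b) * Real.Gamma (c + ((n : ℝ) + 2) * d) :=
            mul_le_mul h1 h2 p2.le (le_trans (by linarith) h1)
    · have hdp : 0 < d := by rw [← hbe] at hbd; linarith
      filter_upwards [gamma_step_seq c d hdp 100 (by norm_num), gamma_mono_seq a b hb] with n h1 h2
      have p1 : 0 < Real.Gamma (a + ((n : ℝ) + 1) * b) := hposG _ (by positivity)
      have p2 : 0 < Real.Gamma (c + ((n : ℝ) + 1) * d) := hposG _ (by positivity)
      calc 100 * (Real.Gamma (a + ((n : ℝ) + 1) * b) * Real.Gamma (c + ((n : ℝ) + 1) * d))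
          = Real.Gamma (a + ((n : ℝ) + 1) * b) * (100 * Real.Gamma (c + ((n : ℝ) + 1) * d)) := by
            ring
        _ ≤ Real.Gamma (a + ((n : ℝ) + 2) * b) * Real.Gamma (c + ((n : ℝ) + 2) * d) :=
            mul_le_mul h2 h1 (by linarith) (hposG _ (by positivity)).le
  apply summable_of_ratio_norm_eventually_le (r := 1/2) (by norm_num)
  filter_upwards [hstep] with n h
  set X := Real.Gamma (a + ((n : ℝ) + 1) * b) * Real.Gamma (c + ((n : ℝ) + 1) * d) with hX
  set X' := Real.Gamma (a + ((n : ℝ) + 2) * b) * Real.Gamma (c + ((n : ℝ) + 2) * d) with hX'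
  have hXp : 0 < X := mul_pos (Real.Gamma_pos_of_pos (by positivity))
    (Real.Gamma_pos_of_pos (by positivity))
  have hX'p : 0 < X' := mul_pos (Real.Gamma_pos_of_pos (by positivity))
    (Real.Gamma_pos_of_pos (by positivity))
  have hK : 0 < Real.Gamma a * Real.Gamma c :=
    mul_pos (Real.Gamma_pos_of_pos ha) (Real.Gamma_pos_of_pos hc)
  have hccn : cc a b c d n = Real.Gamma a * Real.Gamma c / X := rfl
  have hccn1 : cc a b c d (n + 1) = Real.Gamma a * Real.Gamma c / X' := by
    unfold cc; rw [hX']; push_cast; ring_nf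
  have hc1 : 0 < cc a b c d n := cc_pos ha hc hb hd n
  have hc2 : 0 < cc a b c d (n+1) := cc_pos ha hc hb hd (n+1)
  rw [Real.norm_eq_abs, Real.norm_eq_abs, abs_of_pos (by positivity), abs_of_pos (by positivity)]
  push_cast
  rw [hccn1, hccn]
  rw [mul_div_assoc' _ _ X', mul_div_assoc' _ _ X, mul_div_assoc', div_le_div_iff₀ hX'p hXp]
  have hcube : ((n : ℝ) + 1 + 4) ^ 3 ≤ 8 * ((n : ℝ) + 4) ^ 3 := by
    have h58 : ((n : ℝ) + 1 + 4) ≤ 2 * ((n : ℝ) + 4) := by push_cast; linarith [Nat.cast_nonneg (α := ℝ) n]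
    calc ((n : ℝ) + 1 + 4) ^ 3 ≤ (2 * ((n : ℝ) + 4)) ^ 3 :=
          pow_le_pow_left₀ (by positivity) h58 3
      _ = 8 * ((n : ℝ) + 4) ^ 3 := by ring
  have h3p : (0:ℝ) < 3 ^ n := by positivity
  have hps : (3:ℝ) ^ (n+1) = 3 ^ n * 3 := pow_succ 3 n
  rw [hps]
  have hprod : (0:ℝ) < ((n:ℝ)+4)^3 * 3^n * (Real.Gamma a * Real.Gamma c) * X := by positivity
  calc ((n:ℝ)+1+4)^3 * (3^n*3) * (Real.Gamma a * Real.Gamma c) * X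
      ≤ (8*((n:ℝ)+4)^3) * (3^n*3) * (Real.Gamma a * Real.Gamma c) * X := by
        gcongr
    _ = 24 * (((n:ℝ)+4)^3 * 3^n * (Real.Gamma a * Real.Gamma c) * X) := by ring
    _ ≤ 50 * (((n:ℝ)+4)^3 * 3^n * (Real.Gamma a * Real.Gamma c) * X) := by linarith
    _ = 1/2 * (((n:ℝ)+4)^3 * 3^n * (Real.Gamma a * Real.Gamma c)) * (100 * X) := by ring
    _ ≤ 1/2 * (((n:ℝ)+4)^3 * 3^n * (Real.Gamma a * Real.Gamma c)) * X' := by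
        have hEnn : (0:ℝ) ≤ 1/2 * (((n:ℝ)+4)^3 * 3^n * (Real.Gamma a * Real.Gamma c)) := by positivity
        exact mul_le_mul_of_nonneg_left h hEnn


theorem wright_data (a b c d : ℝ) (ha : 0 < a) (hc : 0 < c) (hb : 0 ≤ b) (hd : 0 ≤ d)
    (hbd : 0 < b + d) :
    deriv (wrightW a b c d) 1 = 1 + ∑' n : ℕ, (cc a b c d n * ((n : ℝ) + 2)) ∧
    iteratedDeriv 2 (wrightW a b c d) 1 =
      ∑' n : ℕ, (cc a b c d n * ((n : ℝ) + 2) * ((n : ℝ) + 1)) ∧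
    iteratedDeriv 3 (wrightW a b c d) 1 =
      ∑' n : ℕ, (cc a b c d n * ((n : ℝ) + 2) * ((n : ℝ) + 1) * (n : ℝ)) := by
  set q : ℕ → ℝ := cc a b c d with hq
  have hqpos : ∀ n, 0 < q n := fun n => cc_pos ha hc hb hd n
  have hM := summable_master ha hc hb hd hbd
  have cmp : ∀ (f : ℕ → ℝ), (∀ n, 0 ≤ f n) →
      (∀ n, f n ≤ ((n : ℝ) + 4) ^ 3 * 3 ^ n * q n) → Summable f :=
    fun f h1 h2 => Summable.of_nonneg_of_le h1 h2 hM
  have h23 : ∀ n : ℕ, (2:ℝ) ^ n ≤ 3 ^ n := fun n => pow_le_pow_left₀ (by norm_num) (by norm_num) n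
  set q1 : ℕ → ℝ := fun n => q n * ((n : ℝ) + 2) with hq1
  set q2 : ℕ → ℝ := fun n => q1 n * ((n : ℝ) + 1) with hq2
  set q3 : ℕ → ℝ := fun n => q2 n * (n : ℝ) with hq3
  have hn0 : ∀ n : ℕ, (0:ℝ) ≤ (n : ℝ) := fun n => Nat.cast_nonneg n
  have h3one : ∀ n : ℕ, (1:ℝ) ≤ 3 ^ n := fun n => one_le_pow₀ (by norm_num)
  have step : ∀ (P : ℕ → ℝ), (∀ n, 0 ≤ P n) → (∀ n, P n ≤ ((n:ℝ)+4)^3 * 3^n) →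
      Summable (fun n => q n * P n) := by
    intro P hP0 hPle
    refine cmp _ (fun n => mul_nonneg (hqpos n).le (hP0 n)) (fun n => ?_)
    calc q n * P n ≤ q n * (((n:ℝ)+4)^3 * 3^n) := mul_le_mul_of_nonneg_left (hPle n) (hqpos n).le
      _ = ((n:ℝ)+4)^3 * 3^n * q n := by ring
  have hcube4 : ∀ n : ℕ, (0:ℝ) ≤ ((n:ℝ)+4)^3 := fun n => by positivity
  have hSq : Summable q := by
    refine (step (fun _ => 1) (fun n => by norm_num) (fun n => ?_)).congr (fun n => by ring)
    calc (1:ℝ) = 1 * 1 := by ring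
      _ ≤ ((n:ℝ)+4)^3 * 3^n := by
          refine mul_le_mul ?_ (h3one n) (by norm_num) (hcube4 n)
          nlinarith [hn0 n, mul_nonneg (hn0 n) (hn0 n), mul_nonneg (mul_nonneg (hn0 n) (hn0 n)) (hn0 n)]
  have hSu1 : Summable (fun n => q1 n * 2 ^ (n+1)) := by
    refine (step (fun n => ((n:ℝ)+2) * 2^(n+1)) (fun n => by positivity) (fun n => ?_)).congr
      (fun n => by simp only [hq1]; ring)
    calc ((n:ℝ)+2) * 2^(n+1) = (2*((n:ℝ)+2)) * 2^n := by rw [pow_succ]; ring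
      _ ≤ ((n:ℝ)+4)^3 * 3^n := mul_le_mul (by nlinarith [hn0 n, mul_nonneg (hn0 n) (hn0 n), mul_nonneg (mul_nonneg (hn0 n) (hn0 n)) (hn0 n)]) (h23 n) (by positivity) (hcube4 n)
  have hSu2 : Summable (fun n => q2 n * 2 ^ n) := by
    refine (step (fun n => ((n:ℝ)+2) * ((n:ℝ)+1) * 2^n) (fun n => by positivity) (fun n => ?_)).congr
      (fun n => by simp only [hq1, hq2]; ring)
    exact mul_le_mul (by nlinarith [hn0 n, mul_nonneg (hn0 n) (hn0 n), mul_nonneg (mul_nonneg (hn0 n) (hn0 n)) (hn0 n)]) (h23 n) (by positivity) (hcube4 n)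
  have hSu3 : Summable (fun n => q3 n * 2 ^ n) := by
    refine (step (fun n => ((n:ℝ)+2) * ((n:ℝ)+1) * (n:ℝ) * 2^n) (fun n => by positivity)
      (fun n => ?_)).congr (fun n => by simp only [hq1, hq2, hq3]; ring)
    exact mul_le_mul (by nlinarith [hn0 n, mul_nonneg (hn0 n) (hn0 n), mul_nonneg (mul_nonneg (hn0 n) (hn0 n)) (hn0 n)]) (h23 n) (by positivity) (hcube4 n)
  have hSq1 : Summable q1 := by
    refine (step (fun n => ((n:ℝ)+2)) (fun n => by positivity) (fun n => ?_)).congr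
      (fun n => by simp only [hq1])
    calc ((n:ℝ)+2) = ((n:ℝ)+2) * 1 := by ring
      _ ≤ ((n:ℝ)+4)^3 * 3^n := mul_le_mul (by nlinarith [hn0 n, mul_nonneg (hn0 n) (hn0 n), mul_nonneg (mul_nonneg (hn0 n) (hn0 n)) (hn0 n)]) (h3one n) (by norm_num) (hcube4 n)
  have hSq2 : Summable q2 := by
    refine (step (fun n => ((n:ℝ)+2) * ((n:ℝ)+1)) (fun n => by positivity) (fun n => ?_)).congr
      (fun n => by simp only [hq1, hq2]; ring)
    calc ((n:ℝ)+2) * ((n:ℝ)+1) = (((n:ℝ)+2) * ((n:ℝ)+1)) * 1 := by ring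
      _ ≤ ((n:ℝ)+4)^3 * 3^n := mul_le_mul (by nlinarith [hn0 n, mul_nonneg (hn0 n) (hn0 n), mul_nonneg (mul_nonneg (hn0 n) (hn0 n)) (hn0 n)]) (h3one n) (by norm_num) (hcube4 n)
  -- the open set
  have ht : IsOpen (Set.Ioo (-2:ℝ) 2) := isOpen_Ioo
  have h't : IsPreconnected (Set.Ioo (-2:ℝ) 2) := isPreconnected_Ioo
  have h1t : (1:ℝ) ∈ Set.Ioo (-2:ℝ) 2 := by constructor <;> norm_num
  have habs : ∀ y ∈ Set.Ioo (-2:ℝ) 2, |y| ≤ 2 := fun y hy => abs_le.2 ⟨hy.1.le, hy.2.le⟩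
  -- level 1
  have hd1 : ∀ y ∈ Set.Ioo (-2:ℝ) 2, HasDerivAt (fun x : ℝ => ∑' n : ℕ, q n * x ^ (n+2))
      (∑' n : ℕ, q1 n * y ^ (n+1)) y := by
    intro y hy
    refine hasDerivAt_tsum_of_isPreconnected hSu1 ht h't
      (g := fun n x => q n * x ^ (n+2)) (g' := fun n z => q1 n * z ^ (n+1)) ?_ ?_ h1t ?_ hy
    · intro n z hz
      have h := (hasDerivAt_pow (n+2) z).const_mul (q n)
      have e : q n * (((n:ℕ)+2 : ℕ) * z ^ (n+2-1)) = q1 n * z ^ (n+1) := by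
        push_cast; ring
      rwa [e] at h
    · intro n z hz
      have hzb : |z| ^ (n+1) ≤ 2 ^ (n+1) := pow_le_pow_left₀ (abs_nonneg z) (habs z hz) _
      have : ‖q1 n * z ^ (n+1)‖ = q1 n * |z| ^ (n+1) := by
        rw [Real.norm_eq_abs, abs_mul, abs_pow, abs_of_nonneg (by have := (hqpos n).le; positivity)]
      rw [this]
      exact mul_le_mul_of_nonneg_left hzb (by have := (hqpos n).le; positivity)
    · simpa using hSq
  have HW1 : ∀ y ∈ Set.Ioo (-2:ℝ) 2, HasDerivAt (wrightW a b c d)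
      (1 + ∑' n : ℕ, q1 n * y ^ (n+1)) y := by
    intro y hy
    exact (hasDerivAt_id y).add (hd1 y hy)
  -- level 2
  have hd2 : ∀ y ∈ Set.Ioo (-2:ℝ) 2, HasDerivAt (fun x : ℝ => ∑' n : ℕ, q1 n * x ^ (n+1))
      (∑' n : ℕ, q2 n * y ^ n) y := by
    intro y hy
    refine hasDerivAt_tsum_of_isPreconnected hSu2 ht h't
      (g := fun n x => q1 n * x ^ (n+1)) (g' := fun n z => q2 n * z ^ n) ?_ ?_ h1t ?_ hy
    · intro n z hz
      have h := (hasDerivAt_pow (n+1) z).const_mul (q1 n)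
      have e : q1 n * (((n:ℕ)+1 : ℕ) * z ^ (n+1-1)) = q2 n * z ^ n := by
        push_cast; ring
      rwa [e] at h
    · intro n z hz
      have hzb : |z| ^ n ≤ 2 ^ n := pow_le_pow_left₀ (abs_nonneg z) (habs z hz) _
      have : ‖q2 n * z ^ n‖ = q2 n * |z| ^ n := by
        rw [Real.norm_eq_abs, abs_mul, abs_pow, abs_of_nonneg (by have := (hqpos n).le; positivity)]
      rw [this]
      exact mul_le_mul_of_nonneg_left hzb (by have := (hqpos n).le; positivity)
    · simpa using hSq1
  -- level 3
  have hd3 : ∀ y ∈ Set.Ioo (-2:ℝ) 2, HasDerivAt (fun x : ℝ => ∑' n : ℕ, q2 n * x ^ n)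
      (∑' n : ℕ, q3 n * y ^ (n-1)) y := by
    intro y hy
    refine hasDerivAt_tsum_of_isPreconnected hSu3 ht h't
      (g := fun n x => q2 n * x ^ n) (g' := fun n z => q3 n * z ^ (n-1)) ?_ ?_ h1t ?_ hy
    · intro n z hz
      have h := (hasDerivAt_pow n z).const_mul (q2 n)
      have e : q2 n * ((n:ℕ) * z ^ (n-1)) = q3 n * z ^ (n-1) := by
        push_cast; ring
      rwa [e] at h
    · intro n z hz
      have hzb : |z| ^ (n-1) ≤ 2 ^ n := by
        calc |z| ^ (n-1) ≤ 2 ^ (n-1) := pow_le_pow_left₀ (abs_nonneg z) (habs z hz) _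
          _ ≤ 2 ^ n := pow_le_pow_right₀ (by norm_num) (Nat.sub_le n 1)
      have hq3n : 0 ≤ q3 n := by have := (hqpos n).le; positivity
      have : ‖q3 n * z ^ (n-1)‖ = q3 n * |z| ^ (n-1) := by
        rw [Real.norm_eq_abs, abs_mul, abs_pow, abs_of_nonneg hq3n]
      rw [this]
      exact mul_le_mul_of_nonneg_left hzb hq3n
    · simpa using hSq2
  -- derivative values
  have hW1deriv : ∀ y ∈ Set.Ioo (-2:ℝ) 2,
      deriv (wrightW a b c d) y = 1 + ∑' n : ℕ, q1 n * y ^ (n+1) :=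
    fun y hy => (HW1 y hy).deriv
  have hD1 : deriv (wrightW a b c d) 1 = 1 + ∑' n : ℕ, q1 n := by
    rw [hW1deriv 1 h1t]; simp
  have HS1 : ∀ y ∈ Set.Ioo (-2:ℝ) 2,
      HasDerivAt (fun z : ℝ => 1 + ∑' n : ℕ, q1 n * z ^ (n+1)) (∑' n : ℕ, q2 n * y ^ n) y := by
    intro y hy
    exact (hd2 y hy).const_add (1:ℝ)
  have hEq1 : ∀ y ∈ Set.Ioo (-2:ℝ) 2,
      deriv (deriv (wrightW a b c d)) y = ∑' n : ℕ, q2 n * y ^ n := by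
    intro y hy
    have he : deriv (wrightW a b c d) =ᶠ[nhds y] (fun z => 1 + ∑' n : ℕ, q1 n * z ^ (n+1)) :=
      Filter.eventuallyEq_of_mem (ht.mem_nhds hy) hW1deriv
    rw [he.deriv_eq]
    exact (HS1 y hy).deriv
  have hD2 : iteratedDeriv 2 (wrightW a b c d) 1 = ∑' n : ℕ, q2 n := by
    rw [show (2:ℕ) = 1 + 1 from rfl, iteratedDeriv_succ, iteratedDeriv_one]
    rw [hEq1 1 h1t]; simp
  have hEq2 : ∀ y ∈ Set.Ioo (-2:ℝ) 2,
      deriv (deriv (deriv (wrightW a b c d))) y = ∑' n : ℕ, q3 n * y ^ (n-1) := by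
    intro y hy
    have he : deriv (deriv (wrightW a b c d)) =ᶠ[nhds y] (fun z => ∑' n : ℕ, q2 n * z ^ n) :=
      Filter.eventuallyEq_of_mem (ht.mem_nhds hy) hEq1
    rw [he.deriv_eq]
    exact (hd3 y hy).deriv
  have hD3 : iteratedDeriv 3 (wrightW a b c d) 1 = ∑' n : ℕ, q3 n := by
    rw [show (3:ℕ) = 2 + 1 from rfl, iteratedDeriv_succ,
      show (2:ℕ) = 1 + 1 from rfl, iteratedDeriv_succ, iteratedDeriv_one]
    rw [hEq2 1 h1t]; simp
  exact ⟨hD1, by rw [hD2], by rw [hD3]⟩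

lemma summable_qs {a b c d : ℝ} (ha : 0 < a) (hc : 0 < c) (hb : 0 ≤ b) (hd : 0 ≤ d)
    (hbd : 0 < b + d) :
    Summable (fun n : ℕ => cc a b c d n * ((n : ℝ) + 2)) ∧
    Summable (fun n : ℕ => cc a b c d n * ((n : ℝ) + 2) * ((n : ℝ) + 1)) ∧
    Summable (fun n : ℕ => cc a b c d n * ((n : ℝ) + 2) * ((n : ℝ) + 1) * (n : ℝ)) := by
  have hqpos : ∀ n, 0 < cc a b c d n := fun n => cc_pos ha hc hb hd n
  have hM := summable_master ha hc hb hd hbd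
  have hn0 : ∀ n : ℕ, (0:ℝ) ≤ (n : ℝ) := fun n => Nat.cast_nonneg n
  have h3one : ∀ n : ℕ, (1:ℝ) ≤ 3 ^ n := fun n => one_le_pow₀ (by norm_num)
  have hcube4 : ∀ n : ℕ, (0:ℝ) ≤ ((n:ℝ)+4)^3 := fun n => by positivity
  have step : ∀ (P : ℕ → ℝ), (∀ n, 0 ≤ P n) → (∀ n, P n ≤ ((n:ℝ)+4)^3 * 3^n) →
      Summable (fun n => cc a b c d n * P n) := by
    intro P hP0 hPle
    refine Summable.of_nonneg_of_le (fun n => mul_nonneg (hqpos n).le (hP0 n)) (fun n => ?_) hM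
    calc cc a b c d n * P n ≤ cc a b c d n * (((n:ℝ)+4)^3 * 3^n) :=
          mul_le_mul_of_nonneg_left (hPle n) (hqpos n).le
      _ = ((n:ℝ)+4)^3 * 3^n * cc a b c d n := by ring
  refine ⟨?_, ?_, ?_⟩
  · refine (step (fun n => ((n:ℝ)+2)) (fun n => by positivity) (fun n => ?_)).congr (fun n => rfl)
    calc ((n:ℝ)+2) = ((n:ℝ)+2) * 1 := by ring
      _ ≤ ((n:ℝ)+4)^3 * 3^n := mul_le_mul
          (by nlinarith [hn0 n, mul_nonneg (hn0 n) (hn0 n),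
            mul_nonneg (mul_nonneg (hn0 n) (hn0 n)) (hn0 n)]) (h3one n) (by norm_num) (hcube4 n)
  · refine (step (fun n => ((n:ℝ)+2) * ((n:ℝ)+1)) (fun n => by positivity)
      (fun n => ?_)).congr (fun n => by ring)
    calc ((n:ℝ)+2) * ((n:ℝ)+1) = (((n:ℝ)+2) * ((n:ℝ)+1)) * 1 := by ring
      _ ≤ ((n:ℝ)+4)^3 * 3^n := mul_le_mul
          (by nlinarith [hn0 n, mul_nonneg (hn0 n) (hn0 n),
            mul_nonneg (mul_nonneg (hn0 n) (hn0 n)) (hn0 n)]) (h3one n) (by norm_num) (hcube4 n)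
  · refine (step (fun n => ((n:ℝ)+2) * ((n:ℝ)+1) * (n:ℝ)) (fun n => by positivity)
      (fun n => ?_)).congr (fun n => by ring)
    calc ((n:ℝ)+2) * ((n:ℝ)+1) * (n:ℝ) = (((n:ℝ)+2) * ((n:ℝ)+1) * (n:ℝ)) * 1 := by ring
      _ ≤ ((n:ℝ)+4)^3 * 3^n := mul_le_mul
          (by nlinarith [hn0 n, mul_nonneg (hn0 n) (hn0 n),
            mul_nonneg (mul_nonneg (hn0 n) (hn0 n)) (hn0 n)]) (h3one n) (by norm_num) (hcube4 n)

/-- key estimate for close-to-convexity of L(f) when f ∈ C_H^o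
(or S_H^o, T_H^o), i.e. |Aₙ| ≤ (2n+1)(n+1)/6 and |Bₙ| ≤ (2n−1)(n−1)/6. -/
theorem Lf_close_to_convex_to_close_to_convex_estimate (α₁ β₁ γ₁ δ₁ α₂ β₂ γ₂ δ₂ : ℝ) (A B : ℕ → ℂ)
    (hβ₁ : 0 ≤ β₁) (hδ₁ : 0 ≤ δ₁) (hβδ₁ : 0 < β₁ + δ₁)
    (hβ₂ : 0 ≤ β₂) (hδ₂ : 0 ≤ δ₂) (hβδ₂ : 0 < β₂ + δ₂)
    (hα₁ : 0 < α₁) (hγ₁ : 0 < γ₁) (hα₂ : 0 < α₂) (hγ₂ : 0 < γ₂)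
    (hA : ∀ n : ℕ, 2 ≤ n → ‖A n‖ ≤ (2 * (n : ℝ) + 1) * ((n : ℝ) + 1) / 6)
    (hB : ∀ n : ℕ, 2 ≤ n → ‖B n‖ ≤ (2 * (n : ℝ) - 1) * ((n : ℝ) - 1) / 6)
    (hyp : 2 * iteratedDeriv 3 (wrightW α₁ β₁ γ₁ δ₁) 1
        + 9 * iteratedDeriv 2 (wrightW α₁ β₁ γ₁ δ₁) 1
        + 6 * (deriv (wrightW α₁ β₁ γ₁ δ₁) 1 - 1)
        + 2 * iteratedDeriv 3 (wrightW α₂ β₂ γ₂ δ₂) 1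
        + 3 * iteratedDeriv 2 (wrightW α₂ β₂ γ₂ δ₂) 1 ≤ 6) :
    ∀ ε : ℂ, ‖ε‖ = 1 →
      ∑' n : ℕ, ((n : ℝ) + 2) *
        ‖((Real.Gamma α₁ * Real.Gamma γ₁ /
            (Real.Gamma (α₁ + ((n : ℝ) + 1) * β₁) * Real.Gamma (γ₁ + ((n : ℝ) + 1) * δ₁)) : ℝ) : ℂ) * A (n + 2)
          + ε * ((Real.Gamma α₂ * Real.Gamma γ₂ /
            (Real.Gamma (α₂ + ((n : ℝ) + 1) * β₂) * Real.Gamma (γ₂ + ((n : ℝ) + 1) * δ₂)) : ℝ) : ℂ) * B (n + 2)‖ ≤ 1 := by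
  intro ε hε
  obtain ⟨e1, e2, e3⟩ := wright_data α₁ β₁ γ₁ δ₁ hα₁ hγ₁ hβ₁ hδ₁ hβδ₁
  obtain ⟨f1, f2, f3⟩ := wright_data α₂ β₂ γ₂ δ₂ hα₂ hγ₂ hβ₂ hδ₂ hβδ₂
  obtain ⟨hU1, hU2, hU3⟩ := summable_qs hα₁ hγ₁ hβ₁ hδ₁ hβδ₁
  obtain ⟨hV1, hV2, hV3⟩ := summable_qs hα₂ hγ₂ hβ₂ hδ₂ hβδ₂
  rw [e1, e2, e3, f2, f3] at hyp
  set u : ℕ → ℝ := cc α₁ β₁ γ₁ δ₁ with hu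
  set v : ℕ → ℝ := cc α₂ β₂ γ₂ δ₂ with hv
  have hupos : ∀ n, 0 < u n := fun n => cc_pos hα₁ hγ₁ hβ₁ hδ₁ n
  have hvpos : ∀ n, 0 < v n := fun n => cc_pos hα₂ hγ₂ hβ₂ hδ₂ n
  set maj : ℕ → ℝ := fun n =>
    (2 * (u n * ((n:ℝ)+2) * ((n:ℝ)+1) * (n:ℝ)) + 9 * (u n * ((n:ℝ)+2) * ((n:ℝ)+1))
      + 6 * (u n * ((n:ℝ)+2)) + 2 * (v n * ((n:ℝ)+2) * ((n:ℝ)+1) * (n:ℝ))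
      + 3 * (v n * ((n:ℝ)+2) * ((n:ℝ)+1))) / 6 with hmaj
  have hmaj_sum : Summable maj := by
    apply Summable.div_const
    exact ((((hU3.mul_left 2).add (hU2.mul_left 9)).add (hU1.mul_left 6)).add
      (hV3.mul_left 2)).add (hV2.mul_left 3)
  have hmaj_tsum : ∑' n, maj n ≤ 1 := by
    have h1 : ∑' n, maj n =
        (2 * ∑' n, (u n * ((n:ℝ)+2) * ((n:ℝ)+1) * (n:ℝ))
          + 9 * ∑' n, (u n * ((n:ℝ)+2) * ((n:ℝ)+1))
          + 6 * ∑' n, (u n * ((n:ℝ)+2))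
          + 2 * ∑' n, (v n * ((n:ℝ)+2) * ((n:ℝ)+1) * (n:ℝ))
          + 3 * ∑' n, (v n * ((n:ℝ)+2) * ((n:ℝ)+1))) / 6 := by
      rw [hmaj]
      rw [tsum_div_const]
      congr 1
      rw [Summable.tsum_add (((((hU3.mul_left 2).add (hU2.mul_left 9)).add (hU1.mul_left 6)).add
          (hV3.mul_left 2))) (hV2.mul_left 3),
        Summable.tsum_add ((((hU3.mul_left 2).add (hU2.mul_left 9)).add (hU1.mul_left 6)))
          (hV3.mul_left 2),
        Summable.tsum_add (((hU3.mul_left 2).add (hU2.mul_left 9))) (hU1.mul_left 6),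
        Summable.tsum_add (hU3.mul_left 2) (hU2.mul_left 9),
        tsum_mul_left, tsum_mul_left, tsum_mul_left, tsum_mul_left, tsum_mul_left]
    rw [h1]
    rw [div_le_one (by norm_num)]
    linarith [hyp]
  have hpt : ∀ n : ℕ, ((n : ℝ) + 2) *
      ‖((Real.Gamma α₁ * Real.Gamma γ₁ /
          (Real.Gamma (α₁ + ((n : ℝ) + 1) * β₁) * Real.Gamma (γ₁ + ((n : ℝ) + 1) * δ₁)) : ℝ) : ℂ) * A (n + 2)
        + ε * ((Real.Gamma α₂ * Real.Gamma γ₂ /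
          (Real.Gamma (α₂ + ((n : ℝ) + 1) * β₂) * Real.Gamma (γ₂ + ((n : ℝ) + 1) * δ₂)) : ℝ) : ℂ) * B (n + 2)‖
        ≤ maj n := by
    intro n
    have hA' := hA (n+2) (by omega)
    have hB' := hB (n+2) (by omega)
    push_cast at hA' hB'
    have hn2 : (0:ℝ) ≤ (n:ℝ) + 2 := by positivity
    have hnormA : ‖((u n : ℝ) : ℂ) * A (n+2)‖ = u n * ‖A (n+2)‖ := by
      rw [norm_mul, Complex.norm_real, Real.norm_eq_abs, abs_of_nonneg (hupos n).le]
    have hnormB : ‖ε * ((v n : ℝ) : ℂ) * B (n+2)‖ = v n * ‖B (n+2)‖ := by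
      rw [norm_mul, norm_mul, Complex.norm_real, Real.norm_eq_abs, hε,
        abs_of_nonneg (hvpos n).le, one_mul]
    have key : ‖((u n : ℝ) : ℂ) * A (n+2) + ε * ((v n : ℝ) : ℂ) * B (n+2)‖
        ≤ u n * ((2*((n:ℝ)+2)+1) * (((n:ℝ)+2)+1) / 6) + v n * ((2*((n:ℝ)+2)-1) * (((n:ℝ)+2)-1) / 6) := by
      refine (norm_add_le _ _).trans ?_
      rw [hnormA, hnormB]
      exact add_le_add (mul_le_mul_of_nonneg_left hA' (hupos n).le)
        (mul_le_mul_of_nonneg_left hB' (hvpos n).le)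
    calc ((n : ℝ) + 2) * ‖((u n : ℝ) : ℂ) * A (n+2) + ε * ((v n : ℝ) : ℂ) * B (n+2)‖
        ≤ ((n : ℝ) + 2) * (u n * ((2*((n:ℝ)+2)+1) * (((n:ℝ)+2)+1) / 6)
            + v n * ((2*((n:ℝ)+2)-1) * (((n:ℝ)+2)-1) / 6)) :=
          mul_le_mul_of_nonneg_left key hn2
      _ = maj n := by rw [hmaj]; ring
  have htarget_sum : Summable (fun n : ℕ => ((n : ℝ) + 2) *
      ‖((Real.Gamma α₁ * Real.Gamma γ₁ /
          (Real.Gamma (α₁ + ((n : ℝ) + 1) * β₁) * Real.Gamma (γ₁ + ((n : ℝ) + 1) * δ₁)) : ℝ) : ℂ) * A (n + 2)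
        + ε * ((Real.Gamma α₂ * Real.Gamma γ₂ /
          (Real.Gamma (α₂ + ((n : ℝ) + 1) * β₂) * Real.Gamma (γ₂ + ((n : ℝ) + 1) * δ₂)) : ℝ) : ℂ) * B (n + 2)‖) :=
    Summable.of_nonneg_of_le (fun n => by positivity) hpt hmaj_sum
  exact le_trans (Summable.tsum_le_tsum hpt htarget_sum hmaj_sum) hmaj_tsum
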